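/- (Theorem 2.) Let T ≥ 2 be an integer, let n_1, …, n_T be positive integers, let n_r = max(n_1, …, n_T), and assume n_r ≥ 2. Let l = ⌈log₂ n_r⌉, let s ≥ 1 be an integer, and set t = l + s. Define p_i = 1/2^{i+1} for i ∈ {0,1,…,t−2} and p_{t−1} = 1/2^{t−1}, and Q1(i) = 1 − (1−p_i)^{n_1} − n_1 p_i (1−p_i)^{n_1−1}. Then ∑_{i=0}^{t−1} Q1(i) ≤ (l − 1) + (2/3)·(n_1²/n_r²)·(1 + 2/4^{s}). -/

import Mathlib

lemma stmt15_aux (p : ℝ) (hp0 : 0 ≤ p) (hp1 : p ≤ 1) (m : ℕ) :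
    1 - (1 - p) ^ (m + 1) - ((m : ℝ) + 1) * p * (1 - p) ^ m
      ≤ ((m : ℝ) * ((m : ℝ) + 1) / 2) * p ^ 2 := by
  induction m with
  | zero => simp
  | succ k ih =>
    have ha0 : (0:ℝ) ≤ (1 - p) ^ k := pow_nonneg (by linarith) k
    have ha1 : (1 - p) ^ k ≤ 1 := pow_le_one₀ (by linarith) (by linarith)
    have e1 : (1 - p) ^ (k + 1) = (1 - p) ^ k * (1 - p) := pow_succ _ _
    have e2 : (1 - p) ^ (k + 1 + 1) = (1 - p) ^ k * ((1 - p) * (1 - p)) := by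
      rw [pow_succ, pow_succ]; ring
    push_cast
    push_cast at ih
    rw [e1] at ih
    rw [e2, e1]
    nlinarith [mul_nonneg (mul_nonneg (Nat.cast_nonneg (α := ℝ) k) (sq_nonneg p))
        (sub_nonneg.2 ha1),
      mul_nonneg (sq_nonneg p) (sub_nonneg.2 ha1)]

/-- (Theorem 2.) -/
theorem stmt15 (T : ℕ) (hT : 2 ≤ T) (n : Fin T → ℕ) (hn : ∀ b, 0 < n b)
    (nr : ℕ) (hnr : nr = Finset.univ.sup n) (hnr2 : 2 ≤ nr)
    (s : ℕ) (hs : 1 ≤ s) :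
    let z : Fin T := ⟨0, by omega⟩
    let l : ℕ := Nat.clog 2 nr
    let t : ℕ := l + s
    let p : ℕ → ℝ := fun i => if i < t - 1 then (1 / 2 : ℝ) ^ (i + 1) else (1 / 2 : ℝ) ^ (t - 1)
    let Q1 : ℕ → ℝ := fun i =>
      1 - (1 - p i) ^ (n z) - (n z : ℝ) * p i * (1 - p i) ^ (n z - 1)
    ∑ i ∈ Finset.range t, Q1 i ≤
      ((l : ℝ) - 1) + (2 / 3) * ((n z : ℝ) ^ 2 / (nr : ℝ) ^ 2) * (1 + 2 / (4 : ℝ) ^ s) := by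
  intro z l t p Q1
  -- basic facts
  have hl1 : 1 ≤ l := Nat.clog_pos (by norm_num) (by omega)
  have htls : t = l + s := rfl
  have hn1 : 1 ≤ n z := hn z
  have hn1r : n z ≤ nr := by
    rw [hnr]; exact Finset.le_sup (Finset.mem_univ z)
  obtain ⟨m, hm⟩ : ∃ m, n z = m + 1 := ⟨n z - 1, by omega⟩
  have sq4 : ∀ k : ℕ, ((1 / 2 : ℝ) ^ k) ^ 2 = (1 / 4 : ℝ) ^ k := by
    intro k
    rw [← pow_mul, show k * 2 = 2 * k from by ring, pow_mul]
    norm_num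
  have hpcase : ∀ i, p i = (1 / 2 : ℝ) ^ (i + 1) ∨ p i = (1 / 2 : ℝ) ^ (t - 1) := by
    intro i
    simp only [p]
    split
    exacts [Or.inl rfl, Or.inr rfl]
  have hp01 : ∀ i, 0 ≤ p i ∧ p i ≤ 1 := by
    intro i
    rcases hpcase i with h | h <;> rw [h] <;>
      exact ⟨by positivity, pow_le_one₀ (by norm_num) (by norm_num)⟩
  -- pointwise bounds
  have hQ1le1 : ∀ i, Q1 i ≤ 1 := by
    intro i
    obtain ⟨h0, h1⟩ := hp01 i
    have hb1 : (0:ℝ) ≤ (1 - p i) ^ (n z) := pow_nonneg (by linarith) _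
    have hb2 : (0:ℝ) ≤ (n z : ℝ) * p i * (1 - p i) ^ (n z - 1) :=
      mul_nonneg (mul_nonneg (Nat.cast_nonneg _) h0) (pow_nonneg (by linarith) _)
    simp only [Q1]; linarith
  have hQ1key : ∀ i, Q1 i ≤ ((n z : ℝ) ^ 2 / 2) * (p i) ^ 2 := by
    intro i
    obtain ⟨h0, h1⟩ := hp01 i
    have haux := stmt15_aux (p i) h0 h1 m
    have hle : ((m : ℝ) * ((m : ℝ) + 1) / 2) * (p i) ^ 2 ≤ ((n z : ℝ) ^ 2 / 2) * (p i) ^ 2 := by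
      have : (m : ℝ) * ((m : ℝ) + 1) / 2 ≤ ((n z : ℝ)) ^ 2 / 2 := by
        rw [hm]; push_cast; nlinarith [Nat.cast_nonneg (α := ℝ) m]
      exact mul_le_mul_of_nonneg_right this (sq_nonneg _)
    have hQ : Q1 i = 1 - (1 - p i) ^ (m + 1) - ((m : ℝ) + 1) * p i * (1 - p i) ^ m := by
      simp only [Q1, hm, Nat.add_sub_cancel]
      push_cast
      ring
    rw [hQ]
    exact le_trans haux hle
  -- split the sum
  have ht : t = (l - 1) + (s + 1) := by omega
  rw [ht, Finset.sum_range_add]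
  have hsum1 : ∑ i ∈ Finset.range (l - 1), Q1 i ≤ ((l : ℝ) - 1) := by
    calc ∑ i ∈ Finset.range (l - 1), Q1 i ≤ ∑ i ∈ Finset.range (l - 1), (1:ℝ) :=
          Finset.sum_le_sum fun i _ => hQ1le1 i
      _ = ((l - 1 : ℕ) : ℝ) := by simp
      _ = (l : ℝ) - 1 := by push_cast [Nat.cast_sub hl1]; ring
  have hsum2 : ∑ x ∈ Finset.range (s + 1), Q1 ((l - 1) + x)
      ≤ (2 / 3) * ((n z : ℝ) ^ 2 / (nr : ℝ) ^ 2) * (1 + 2 / (4 : ℝ) ^ s) := by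
    have step1 : ∑ x ∈ Finset.range (s + 1), Q1 ((l - 1) + x)
        ≤ ((n z : ℝ) ^ 2 / 2) * ∑ x ∈ Finset.range (s + 1), (p ((l - 1) + x)) ^ 2 := by
      rw [Finset.mul_sum]
      exact Finset.sum_le_sum fun x _ => hQ1key _
    -- compute the p-sum
    have hpsum : ∑ x ∈ Finset.range (s + 1), (p ((l - 1) + x)) ^ 2
        = (4 / 3) * (1 / 4 : ℝ) ^ l * (1 + 2 * (1 / 4 : ℝ) ^ s) := by
      rw [Finset.sum_range_succ]
      have hlast : p ((l - 1) + s) = (1 / 2 : ℝ) ^ (t - 1) := by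
        simp only [p]
        rw [if_neg]; omega
      have hmid : ∀ x ∈ Finset.range s, (p ((l - 1) + x)) ^ 2 = (1/4 : ℝ) ^ l * (1/4 : ℝ) ^ x := by
        intro x hx
        rw [Finset.mem_range] at hx
        have hpi : p ((l - 1) + x) = (1 / 2 : ℝ) ^ ((l - 1) + x + 1) := by
          simp only [p]; rw [if_pos]; omega
        rw [hpi, show (l - 1) + x + 1 = l + x from by omega, pow_add, mul_pow, sq4, sq4]
      rw [Finset.sum_congr rfl hmid, ← Finset.mul_sum, hlast]
      have hgeo : ∑ x ∈ Finset.range s, (1/4 : ℝ) ^ x = (4/3) * (1 - (1/4:ℝ)^s) := by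
        rw [geom_sum_eq (by norm_num)]
        ring
      have hlast2 : ((1 / 2 : ℝ) ^ (t - 1)) ^ 2 = 4 * ((1/4:ℝ)^l * (1/4:ℝ)^s) := by
        rw [sq4 (t - 1), ← pow_add, show l + s = (t - 1) + 1 from by omega, pow_succ]
        ring
      rw [hgeo, hlast2]
      ring
    have h24 : ((2:ℝ) ^ l) ^ 2 = (4:ℝ) ^ l := by
      rw [← pow_mul, show l * 2 = 2 * l from by ring, pow_mul]; norm_num
    have h4l : (1 / 4 : ℝ) ^ l ≤ 1 / (nr : ℝ) ^ 2 := by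
      have h2l : (nr : ℝ) ≤ (2 : ℝ) ^ l := by
        have := Nat.le_pow_clog (b := 2) (by norm_num) nr
        exact_mod_cast this
      have hnrpos : (0:ℝ) < (nr : ℝ) := by positivity
      have hsq : (nr : ℝ) ^ 2 ≤ ((2:ℝ) ^ l) ^ 2 := by nlinarith [pow_pos (by norm_num : (0:ℝ) < 2) l]
      have h14 : (1 / 4 : ℝ) ^ l = 1 / ((2:ℝ) ^ l) ^ 2 := by
        rw [h24, div_pow, one_pow]
      rw [h14]
      exact one_div_le_one_div_of_le (by positivity) hsq
    calc ∑ x ∈ Finset.range (s + 1), Q1 ((l - 1) + x)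
        ≤ ((n z : ℝ) ^ 2 / 2) * ∑ x ∈ Finset.range (s + 1), (p ((l - 1) + x)) ^ 2 := step1
      _ = ((n z : ℝ) ^ 2 / 2) * ((4 / 3) * (1 / 4 : ℝ) ^ l * (1 + 2 * (1 / 4 : ℝ) ^ s)) := by
          rw [hpsum]
      _ ≤ ((n z : ℝ) ^ 2 / 2) * ((4 / 3) * (1 / (nr : ℝ) ^ 2) * (1 + 2 * (1 / 4 : ℝ) ^ s)) := by
          apply mul_le_mul_of_nonneg_left _ (by positivity)
          apply mul_le_mul_of_nonneg_right _ (by positivity)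
          apply mul_le_mul_of_nonneg_left h4l (by norm_num)
      _ = (2 / 3) * ((n z : ℝ) ^ 2 / (nr : ℝ) ^ 2) * (1 + 2 / (4 : ℝ) ^ s) := by
          rw [div_pow, one_pow]
          ring
  linarith
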